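/- The iterated sum Σ_{ℓ_7 = 7}^{∞} ( Σ_{ℓ_6 = 6}^{ℓ_7 - 1} ( Σ_{ℓ_5 = 5}^{ℓ_6 - 1} ( Σ_{ℓ_4 = 4}^{ℓ_5 - 1} ( Σ_{ℓ_3 = 3}^{ℓ_4 - 1} ( Σ_{ℓ_2 = 2}^{ℓ_3 - 1} ( Σ_{ℓ_1 = 1}^{ℓ_2 - 1} 1/(ℓ_1² · ℓ_2² · ℓ_3² · ℓ_4² · ℓ_5² · ℓ_6² · ℓ_7²) ) ) ) ) ) ) converges and equals π^{14} / 15!. -/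

import Mathlib

open Real Finset Filter

noncomputable def AA : ℕ → ℕ → ℝ
  | 0, _ => 1
  | (k+1), N => ∑ n ∈ Finset.Icc 1 N, (1/(n:ℝ)^2) * AA k (n-1)

noncomputable def Ee (k N : ℕ) : ℝ :=
  ∑ s ∈ Finset.powersetCard k (Finset.Icc 1 N), ∏ i ∈ s, (1/(i:ℝ)^2)

noncomputable def Pp (j N : ℕ) : ℝ := ∑ n ∈ Finset.Icc 1 N, ((1:ℝ)/(n:ℝ)^2)^j

lemma Ee_zero (N : ℕ) : Ee 0 N = 1 := by
  simp [Ee]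

lemma Ee_succ (k N : ℕ) :
    Ee k (N+1) = Ee k N + (if k = 0 then 0 else (1/((N:ℝ)+1)^2) * Ee (k-1) N) := by
  rcases k with _ | k
  · simp [Ee_zero]
  · simp only [Nat.succ_ne_zero, if_false, Nat.add_sub_cancel]
    have hins : Finset.Icc 1 (N+1) = insert (N+1) (Finset.Icc 1 N) := by
      ext a; simp [Finset.mem_Icc, Finset.mem_insert]; omega
    have hni : (N+1) ∉ Finset.Icc 1 N := by simp
    rw [Ee, hins, Finset.powersetCard_succ_insert hni, Finset.sum_union]
    · congr 1
      rw [Finset.sum_image, Ee, Finset.mul_sum]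
      · refine Finset.sum_congr rfl fun s hs => ?_
        have hns : (N+1) ∉ s := fun h => hni (Finset.mem_powersetCard.mp hs |>.1 h)
        rw [Finset.prod_insert hns]
        push_cast
        ring
      · intro s hs t ht hst
        have hns : (N+1) ∉ s := fun h => hni (Finset.mem_powersetCard.mp hs |>.1 h)
        have hnt : (N+1) ∉ t := fun h => hni (Finset.mem_powersetCard.mp ht |>.1 h)
        have := congrArg (Finset.erase · (N+1)) hst
        simpa [Finset.erase_insert hns, Finset.erase_insert hnt] using this
    · rw [Finset.disjoint_left]
      intro s hs hs'
      have h1 : (N+1) ∉ s := fun h => hni (Finset.mem_powersetCard.mp hs |>.1 h)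
      obtain ⟨t, ht, rfl⟩ := Finset.mem_image.mp hs'
      exact h1 (Finset.mem_insert_self _ _)

lemma AA_eq_Ee : ∀ N k, AA k N = Ee k N := by
  intro N
  induction N with
  | zero =>
    intro k
    rcases k with _ | k
    · simp [AA, Ee_zero]
    · rw [Ee]
      rw [show Finset.Icc 1 0 = ∅ from rfl, Finset.powersetCard_eq_empty.mpr (by simp)]
      simp [AA]
  | succ N ih =>
    intro k
    rcases k with _ | k
    · simp [AA, Ee_zero]
    · rw [Ee_succ]
      simp only [Nat.succ_ne_zero, if_false, Nat.add_sub_cancel]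
      show AA (k+1) (N+1) = Ee (k+1) N + 1 / ((N:ℝ)+1) ^ 2 * Ee k N
      rw [← ih, ← ih]
      rw [AA, AA, Finset.sum_Icc_succ_top (by omega : 1 ≤ N+1)]
      push_cast
      simp

lemma AA_vanish {k m : ℕ} (h : m < k) : AA k m = 0 := by
  rw [AA_eq_Ee, Ee]
  rw [Finset.powersetCard_eq_empty.mpr (by simp; omega)]
  simp

lemma Ee_nonneg (k N : ℕ) : 0 ≤ Ee k N := by
  apply Finset.sum_nonneg
  intro s _
  apply Finset.prod_nonneg
  intro i _
  positivity

noncomputable def xv (N : ℕ) : Fin N → ℝ := fun i => (1:ℝ)/(((i:ℕ):ℝ)+1)^2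

def emb (N : ℕ) : Fin N ↪ ℕ := ⟨fun i => (i:ℕ)+1, fun a b h => by
  apply Fin.ext
  have : (a:ℕ)+1 = (b:ℕ)+1 := h
  omega⟩

@[simp] lemma emb_apply (N : ℕ) (i : Fin N) : emb N i = (i:ℕ)+1 := rfl

lemma emb_univ (N : ℕ) : (Finset.univ : Finset (Fin N)).map (emb N) = Finset.Icc 1 N := by
  ext a
  simp only [Finset.mem_map, Finset.mem_univ, true_and, Finset.mem_Icc, emb_apply,
    Function.Embedding.coeFn_mk]
  constructor
  · rintro ⟨i, rfl⟩; omega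
  · rintro ⟨h1, h2⟩; exact ⟨⟨a-1, by omega⟩, by simp; omega⟩

lemma aeval_esymm (N j : ℕ) :
    MvPolynomial.aeval (xv N) (MvPolynomial.esymm (Fin N) ℝ j) = Ee j N := by
  rw [MvPolynomial.esymm, map_sum, Ee, ← emb_univ, Finset.powersetCard_map, Finset.sum_map]
  refine Finset.sum_congr rfl fun s _ => ?_
  rw [map_prod, show ((Finset.mapEmbedding (emb N)).toEmbedding s) = s.map (emb N) from
    Finset.mapEmbedding_apply, Finset.prod_map]
  refine Finset.prod_congr rfl fun i _ => ?_
  rw [MvPolynomial.aeval_X]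
  simp [xv, emb_apply]

lemma aeval_psum (N j : ℕ) :
    MvPolynomial.aeval (xv N) (MvPolynomial.psum (Fin N) ℝ j) = Pp j N := by
  rw [MvPolynomial.psum, map_sum, Pp, ← emb_univ, Finset.sum_map]
  refine Finset.sum_congr rfl fun i _ => ?_
  rw [map_pow, MvPolynomial.aeval_X]
  simp [xv, emb_apply]

lemma newton_real (k N : ℕ) :
    (k:ℝ) * Ee k N = (-1:ℝ)^(k+1) * ∑ i ∈ Finset.range k, (-1:ℝ)^i * Ee i N * Pp (k-i) N := by
  have h := congrArg (MvPolynomial.aeval (xv N)) (MvPolynomial.mul_esymm_eq_sum (Fin N) ℝ k)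
  simp only [map_mul, map_natCast, map_pow, map_neg, map_one, map_sum, aeval_esymm,
    aeval_psum] at h
  rw [h]
  congr 1
  rw [Finset.sum_filter, Finset.Nat.sum_antidiagonal_eq_sum_range_succ_mk,
    Finset.sum_range_succ, if_neg (lt_irrefl k), add_zero]
  exact Finset.sum_congr rfl fun i hi => if_pos (Finset.mem_range.mp hi)

lemma bern5 : bernoulli' 5 = 0 := bernoulli'_eq_zero_of_odd ⟨2, rfl⟩ (by norm_num)
lemma bern7 : bernoulli' 7 = 0 := bernoulli'_eq_zero_of_odd ⟨3, rfl⟩ (by norm_num)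
lemma bern9 : bernoulli' 9 = 0 := bernoulli'_eq_zero_of_odd ⟨4, rfl⟩ (by norm_num)
lemma bern11 : bernoulli' 11 = 0 := bernoulli'_eq_zero_of_odd ⟨5, rfl⟩ (by norm_num)
lemma bern13 : bernoulli' 13 = 0 := bernoulli'_eq_zero_of_odd ⟨6, rfl⟩ (by norm_num)

lemma bern6 : bernoulli' 6 = 1/42 := by
  rw [bernoulli'_def]
  norm_num [Finset.sum_range_succ, bern5, Nat.choose]

lemma bern8 : bernoulli' 8 = -1/30 := by
  rw [bernoulli'_def]
  norm_num [Finset.sum_range_succ, bern5, bern6, bern7, Nat.choose]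

lemma bern10 : bernoulli' 10 = 5/66 := by
  rw [bernoulli'_def]
  norm_num [Finset.sum_range_succ, bern5, bern6, bern7, bern8, bern9, Nat.choose]

lemma bern12 : bernoulli' 12 = -691/2730 := by
  rw [bernoulli'_def]
  norm_num [Finset.sum_range_succ, bern5, bern6, bern7, bern8, bern9, bern10, bern11, Nat.choose]

lemma bern14 : bernoulli' 14 = 7/6 := by
  rw [bernoulli'_def]
  norm_num [Finset.sum_range_succ, bern5, bern6, bern7, bern8, bern9, bern10, bern11, bern12,
    bern13, Nat.choose]

lemma Pp_tendsto {j : ℕ} (hj : j ≠ 0) :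
    Tendsto (fun N => Pp j N) atTop
      (nhds ((-1 : ℝ) ^ (j + 1) * (2 : ℝ) ^ (2 * j - 1) * π ^ (2 * j) *
        bernoulli (2 * j) / (Nat.factorial (2 * j)))) := by
  have h := (hasSum_zeta_nat hj).tendsto_sum_nat
  have h2 := (tendsto_add_atTop_iff_nat 1).mpr h
  have heq : ∀ N, Pp j N = ∑ i ∈ Finset.range (N + 1), 1 / (i : ℝ) ^ (2 * j) := by
    intro N
    rw [Finset.sum_range_succ', Pp]
    have h0 : (1:ℝ) / (0:ℕ) ^ (2 * j) = 0 := by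
      rw [Nat.cast_zero, zero_pow (by omega)]; simp
    rw [h0, add_zero]
    rw [show Finset.Icc 1 N = (Finset.range N).map ⟨Nat.succ, Nat.succ_injective⟩ from by
      ext a
      simp only [Finset.mem_Icc, Finset.mem_map, Finset.mem_range,
        Function.Embedding.coeFn_mk, Nat.succ_eq_add_one]
      constructor
      · rintro ⟨h1, h2⟩; exact ⟨a-1, by omega, by omega⟩
      · rintro ⟨i, hi, rfl⟩; omega]
    rw [Finset.sum_map]
    refine Finset.sum_congr rfl fun i _ => ?_
    simp only [Function.Embedding.coeFn_mk, Nat.succ_eq_add_one]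
    rw [div_pow, one_pow, ← pow_mul]
  simpa only [← heq] using h2

lemma bcast {n : ℕ} (h2 : n ≠ 1) (q : ℚ) (hq : bernoulli' n = q) : ((bernoulli n : ℚ) : ℝ) = (q:ℝ) := by
  rw [bernoulli_eq_bernoulli'_of_ne_one h2, hq]

lemma bq1 : bernoulli 2 = (1/6 : ℚ) := by
  rw [bernoulli_eq_bernoulli'_of_ne_one (by norm_num), bernoulli'_two]

lemma Pt1 : Tendsto (fun N => Pp 1 N) atTop (nhds (π^2/6)) := by
  have h := Pp_tendsto (by norm_num : (1:ℕ) ≠ 0)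
  convert h using 2
  norm_num [bq1, Nat.factorial]
  ring

lemma bq2 : bernoulli 4 = (-1/30 : ℚ) := by
  rw [bernoulli_eq_bernoulli'_of_ne_one (by norm_num), bernoulli'_four]

lemma Pt2 : Tendsto (fun N => Pp 2 N) atTop (nhds (π^4/90)) := by
  have h := Pp_tendsto (by norm_num : (2:ℕ) ≠ 0)
  convert h using 2
  norm_num [bq2, Nat.factorial]
  ring

lemma bq3 : bernoulli 6 = (1/42 : ℚ) := by
  rw [bernoulli_eq_bernoulli'_of_ne_one (by norm_num), bern6]

lemma Pt3 : Tendsto (fun N => Pp 3 N) atTop (nhds (π^6/945)) := by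
  have h := Pp_tendsto (by norm_num : (3:ℕ) ≠ 0)
  convert h using 2
  norm_num [bq3, Nat.factorial]
  ring

lemma bq4 : bernoulli 8 = (-1/30 : ℚ) := by
  rw [bernoulli_eq_bernoulli'_of_ne_one (by norm_num), bern8]

lemma Pt4 : Tendsto (fun N => Pp 4 N) atTop (nhds (π^8/9450)) := by
  have h := Pp_tendsto (by norm_num : (4:ℕ) ≠ 0)
  convert h using 2
  norm_num [bq4, Nat.factorial]
  ring

lemma bq5 : bernoulli 10 = (5/66 : ℚ) := by
  rw [bernoulli_eq_bernoulli'_of_ne_one (by norm_num), bern10]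

lemma Pt5 : Tendsto (fun N => Pp 5 N) atTop (nhds (π^10/93555)) := by
  have h := Pp_tendsto (by norm_num : (5:ℕ) ≠ 0)
  convert h using 2
  norm_num [bq5, Nat.factorial]
  ring

lemma bq6 : bernoulli 12 = (-691/2730 : ℚ) := by
  rw [bernoulli_eq_bernoulli'_of_ne_one (by norm_num), bern12]

lemma Pt6 : Tendsto (fun N => Pp 6 N) atTop (nhds (691*π^12/638512875)) := by
  have h := Pp_tendsto (by norm_num : (6:ℕ) ≠ 0)
  convert h using 2
  norm_num [bq6, Nat.factorial]
  ring

lemma bq7 : bernoulli 14 = (7/6 : ℚ) := by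
  rw [bernoulli_eq_bernoulli'_of_ne_one (by norm_num), bern14]

lemma Pt7 : Tendsto (fun N => Pp 7 N) atTop (nhds (2*π^14/18243225)) := by
  have h := Pp_tendsto (by norm_num : (7:ℕ) ≠ 0)
  convert h using 2
  norm_num [bq7, Nat.factorial]
  ring


lemma Et0 : Tendsto (fun N => Ee 0 N) atTop (nhds 1) := by
  simp only [Ee_zero]; exact tendsto_const_nhds

lemma Et1 : Tendsto (fun N => Ee 1 N) atTop (nhds (π^2/6)) := by
  have hpt : ∀ N, (∑ i ∈ Finset.range 1, (-1:ℝ)^i * Ee i N * Pp (1-i) N)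
      = Ee 0 N * Pp 1 N := by
    intro N
    simp only [Finset.sum_range_succ, Finset.sum_range_zero]
    norm_num
    all_goals ring
  have hcomb : Tendsto (fun N => Ee 0 N * Pp 1 N) atTop (nhds (((1:ℝ)) * (π^2/6))) := Et0.mul Pt1
  have hsum := Tendsto.congr (fun N => (hpt N).symm) hcomb
  have h2 := (hsum.const_mul ((-1:ℝ)^(1+1))).div_const (((1:ℕ)):ℝ)
  have hE : ∀ N, Ee 1 N = (-1:ℝ)^(1+1) *
      (∑ i ∈ Finset.range 1, (-1:ℝ)^i * Ee i N * Pp (1-i) N) / (((1:ℕ)):ℝ) := by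
    intro N
    rw [eq_div_iff (by norm_num : (((1:ℕ)):ℝ) ≠ 0)]
    linear_combination newton_real 1 N
  refine Tendsto.congr (fun N => (hE N).symm) ?_
  convert h2 using 2
  field_simp
  all_goals ring

lemma Et2 : Tendsto (fun N => Ee 2 N) atTop (nhds (π^4/120)) := by
  have hpt : ∀ N, (∑ i ∈ Finset.range 2, (-1:ℝ)^i * Ee i N * Pp (2-i) N)
      = Ee 0 N * Pp 2 N - Ee 1 N * Pp 1 N := by
    intro N
    simp only [Finset.sum_range_succ, Finset.sum_range_zero]
    norm_num
    all_goals ring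
  have hcomb : Tendsto (fun N => Ee 0 N * Pp 2 N - Ee 1 N * Pp 1 N) atTop (nhds (((1:ℝ)) * (π^4/90) - (π^2/6) * (π^2/6))) := (Et0.mul Pt2).sub (Et1.mul Pt1)
  have hsum := Tendsto.congr (fun N => (hpt N).symm) hcomb
  have h2 := (hsum.const_mul ((-1:ℝ)^(2+1))).div_const (((2:ℕ)):ℝ)
  have hE : ∀ N, Ee 2 N = (-1:ℝ)^(2+1) *
      (∑ i ∈ Finset.range 2, (-1:ℝ)^i * Ee i N * Pp (2-i) N) / (((2:ℕ)):ℝ) := by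
    intro N
    rw [eq_div_iff (by norm_num : (((2:ℕ)):ℝ) ≠ 0)]
    linear_combination newton_real 2 N
  refine Tendsto.congr (fun N => (hE N).symm) ?_
  convert h2 using 2
  field_simp
  all_goals ring

lemma Et3 : Tendsto (fun N => Ee 3 N) atTop (nhds (π^6/5040)) := by
  have hpt : ∀ N, (∑ i ∈ Finset.range 3, (-1:ℝ)^i * Ee i N * Pp (3-i) N)
      = Ee 0 N * Pp 3 N - Ee 1 N * Pp 2 N + Ee 2 N * Pp 1 N := by
    intro N
    simp only [Finset.sum_range_succ, Finset.sum_range_zero]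
    norm_num
    all_goals ring
  have hcomb : Tendsto (fun N => Ee 0 N * Pp 3 N - Ee 1 N * Pp 2 N + Ee 2 N * Pp 1 N) atTop (nhds (((1:ℝ)) * (π^6/945) - (π^2/6) * (π^4/90) + (π^4/120) * (π^2/6))) := ((Et0.mul Pt3).sub (Et1.mul Pt2)).add (Et2.mul Pt1)
  have hsum := Tendsto.congr (fun N => (hpt N).symm) hcomb
  have h2 := (hsum.const_mul ((-1:ℝ)^(3+1))).div_const (((3:ℕ)):ℝ)
  have hE : ∀ N, Ee 3 N = (-1:ℝ)^(3+1) *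
      (∑ i ∈ Finset.range 3, (-1:ℝ)^i * Ee i N * Pp (3-i) N) / (((3:ℕ)):ℝ) := by
    intro N
    rw [eq_div_iff (by norm_num : (((3:ℕ)):ℝ) ≠ 0)]
    linear_combination newton_real 3 N
  refine Tendsto.congr (fun N => (hE N).symm) ?_
  convert h2 using 2
  field_simp
  all_goals ring

lemma Et4 : Tendsto (fun N => Ee 4 N) atTop (nhds (π^8/362880)) := by
  have hpt : ∀ N, (∑ i ∈ Finset.range 4, (-1:ℝ)^i * Ee i N * Pp (4-i) N)
      = Ee 0 N * Pp 4 N - Ee 1 N * Pp 3 N + Ee 2 N * Pp 2 N - Ee 3 N * Pp 1 N := by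
    intro N
    simp only [Finset.sum_range_succ, Finset.sum_range_zero]
    norm_num
    all_goals ring
  have hcomb : Tendsto (fun N => Ee 0 N * Pp 4 N - Ee 1 N * Pp 3 N + Ee 2 N * Pp 2 N - Ee 3 N * Pp 1 N) atTop (nhds (((1:ℝ)) * (π^8/9450) - (π^2/6) * (π^6/945) + (π^4/120) * (π^4/90) - (π^6/5040) * (π^2/6))) := (((Et0.mul Pt4).sub (Et1.mul Pt3)).add (Et2.mul Pt2)).sub (Et3.mul Pt1)
  have hsum := Tendsto.congr (fun N => (hpt N).symm) hcomb
  have h2 := (hsum.const_mul ((-1:ℝ)^(4+1))).div_const (((4:ℕ)):ℝ)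
  have hE : ∀ N, Ee 4 N = (-1:ℝ)^(4+1) *
      (∑ i ∈ Finset.range 4, (-1:ℝ)^i * Ee i N * Pp (4-i) N) / (((4:ℕ)):ℝ) := by
    intro N
    rw [eq_div_iff (by norm_num : (((4:ℕ)):ℝ) ≠ 0)]
    linear_combination newton_real 4 N
  refine Tendsto.congr (fun N => (hE N).symm) ?_
  convert h2 using 2
  field_simp
  all_goals ring

lemma Et5 : Tendsto (fun N => Ee 5 N) atTop (nhds (π^10/39916800)) := by
  have hpt : ∀ N, (∑ i ∈ Finset.range 5, (-1:ℝ)^i * Ee i N * Pp (5-i) N)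
      = Ee 0 N * Pp 5 N - Ee 1 N * Pp 4 N + Ee 2 N * Pp 3 N - Ee 3 N * Pp 2 N + Ee 4 N * Pp 1 N := by
    intro N
    simp only [Finset.sum_range_succ, Finset.sum_range_zero]
    norm_num
    all_goals ring
  have hcomb : Tendsto (fun N => Ee 0 N * Pp 5 N - Ee 1 N * Pp 4 N + Ee 2 N * Pp 3 N - Ee 3 N * Pp 2 N + Ee 4 N * Pp 1 N) atTop (nhds (((1:ℝ)) * (π^10/93555) - (π^2/6) * (π^8/9450) + (π^4/120) * (π^6/945) - (π^6/5040) * (π^4/90) + (π^8/362880) * (π^2/6))) := ((((Et0.mul Pt5).sub (Et1.mul Pt4)).add (Et2.mul Pt3)).sub (Et3.mul Pt2)).add (Et4.mul Pt1)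
  have hsum := Tendsto.congr (fun N => (hpt N).symm) hcomb
  have h2 := (hsum.const_mul ((-1:ℝ)^(5+1))).div_const (((5:ℕ)):ℝ)
  have hE : ∀ N, Ee 5 N = (-1:ℝ)^(5+1) *
      (∑ i ∈ Finset.range 5, (-1:ℝ)^i * Ee i N * Pp (5-i) N) / (((5:ℕ)):ℝ) := by
    intro N
    rw [eq_div_iff (by norm_num : (((5:ℕ)):ℝ) ≠ 0)]
    linear_combination newton_real 5 N
  refine Tendsto.congr (fun N => (hE N).symm) ?_
  convert h2 using 2
  field_simp
  all_goals ring

lemma Et6 : Tendsto (fun N => Ee 6 N) atTop (nhds (π^12/6227020800)) := by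
  have hpt : ∀ N, (∑ i ∈ Finset.range 6, (-1:ℝ)^i * Ee i N * Pp (6-i) N)
      = Ee 0 N * Pp 6 N - Ee 1 N * Pp 5 N + Ee 2 N * Pp 4 N - Ee 3 N * Pp 3 N + Ee 4 N * Pp 2 N - Ee 5 N * Pp 1 N := by
    intro N
    simp only [Finset.sum_range_succ, Finset.sum_range_zero]
    norm_num
    all_goals ring
  have hcomb : Tendsto (fun N => Ee 0 N * Pp 6 N - Ee 1 N * Pp 5 N + Ee 2 N * Pp 4 N - Ee 3 N * Pp 3 N + Ee 4 N * Pp 2 N - Ee 5 N * Pp 1 N) atTop (nhds (((1:ℝ)) * ((691*π^12/638512875)) - (π^2/6) * (π^10/93555) + (π^4/120) * (π^8/9450) - (π^6/5040) * (π^6/945) + (π^8/362880) * (π^4/90) - (π^10/39916800) * (π^2/6))) := (((((Et0.mul Pt6).sub (Et1.mul Pt5)).add (Et2.mul Pt4)).sub (Et3.mul Pt3)).add (Et4.mul Pt2)).sub (Et5.mul Pt1)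
  have hsum := Tendsto.congr (fun N => (hpt N).symm) hcomb
  have h2 := (hsum.const_mul ((-1:ℝ)^(6+1))).div_const (((6:ℕ)):ℝ)
  have hE : ∀ N, Ee 6 N = (-1:ℝ)^(6+1) *
      (∑ i ∈ Finset.range 6, (-1:ℝ)^i * Ee i N * Pp (6-i) N) / (((6:ℕ)):ℝ) := by
    intro N
    rw [eq_div_iff (by norm_num : (((6:ℕ)):ℝ) ≠ 0)]
    linear_combination newton_real 6 N
  refine Tendsto.congr (fun N => (hE N).symm) ?_
  convert h2 using 2
  field_simp
  all_goals ring

lemma Et7 : Tendsto (fun N => Ee 7 N) atTop (nhds (π^14/1307674368000)) := by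
  have hpt : ∀ N, (∑ i ∈ Finset.range 7, (-1:ℝ)^i * Ee i N * Pp (7-i) N)
      = Ee 0 N * Pp 7 N - Ee 1 N * Pp 6 N + Ee 2 N * Pp 5 N - Ee 3 N * Pp 4 N + Ee 4 N * Pp 3 N - Ee 5 N * Pp 2 N + Ee 6 N * Pp 1 N := by
    intro N
    simp only [Finset.sum_range_succ, Finset.sum_range_zero]
    norm_num
    all_goals ring
  have hcomb : Tendsto (fun N => Ee 0 N * Pp 7 N - Ee 1 N * Pp 6 N + Ee 2 N * Pp 5 N - Ee 3 N * Pp 4 N + Ee 4 N * Pp 3 N - Ee 5 N * Pp 2 N + Ee 6 N * Pp 1 N) atTop (nhds (((1:ℝ)) * ((2*π^14/18243225)) - (π^2/6) * ((691*π^12/638512875)) + (π^4/120) * (π^10/93555) - (π^6/5040) * (π^8/9450) + (π^8/362880) * (π^6/945) - (π^10/39916800) * (π^4/90) + (π^12/6227020800) * (π^2/6))) := ((((((Et0.mul Pt7).sub (Et1.mul Pt6)).add (Et2.mul Pt5)).sub (Et3.mul Pt4)).add (Et4.mul Pt3)).sub (Et5.mul Pt2)).add (Et6.mul Pt1)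
  have hsum := Tendsto.congr (fun N => (hpt N).symm) hcomb
  have h2 := (hsum.const_mul ((-1:ℝ)^(7+1))).div_const (((7:ℕ)):ℝ)
  have hE : ∀ N, Ee 7 N = (-1:ℝ)^(7+1) *
      (∑ i ∈ Finset.range 7, (-1:ℝ)^i * Ee i N * Pp (7-i) N) / (((7:ℕ)):ℝ) := by
    intro N
    rw [eq_div_iff (by norm_num : (((7:ℕ)):ℝ) ≠ 0)]
    linear_combination newton_real 7 N
  refine Tendsto.congr (fun N => (hE N).symm) ?_
  convert h2 using 2
  field_simp
  all_goals ring


lemma stepc (k m : ℕ) (c : ℝ) :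
    ∑ ℓ ∈ Finset.Icc (k+1) m, AA k (ℓ-1) * (1/((ℓ:ℝ)^2 * c)) = AA (k+1) m * (1/c) := by
  have hsub : Finset.Icc (k+1) m ⊆ Finset.Icc 1 m := Finset.Icc_subset_Icc_left (by omega)
  calc ∑ ℓ ∈ Finset.Icc (k+1) m, AA k (ℓ-1) * (1/((ℓ:ℝ)^2 * c))
      = ∑ ℓ ∈ Finset.Icc (k+1) m, (1/(ℓ:ℝ)^2) * AA k (ℓ-1) * (1/c) := by
        refine Finset.sum_congr rfl fun ℓ _ => ?_
        simp only [one_div, mul_inv]; ring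
    _ = ∑ ℓ ∈ Finset.Icc 1 m, (1/(ℓ:ℝ)^2) * AA k (ℓ-1) * (1/c) := by
        refine Finset.sum_subset hsub fun x hx hnx => ?_
        have hxk : x - 1 < k := by
          simp only [Finset.mem_Icc] at hx hnx
          omega
        rw [AA_vanish hxk]
        ring
    _ = (∑ ℓ ∈ Finset.Icc 1 m, (1/(ℓ:ℝ)^2) * AA k (ℓ-1)) * (1/c) := by
        rw [Finset.sum_mul]
    _ = AA (k+1) m * (1/c) := by rw [AA]

lemma stepc1 (m : ℕ) (c : ℝ) :
    ∑ ℓ ∈ Finset.Icc 1 m, 1/((ℓ:ℝ)^2 * c) = AA 1 m * (1/c) := by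
  have h := stepc 0 m c
  simpa [AA] using h

lemma inner_eq (n : ℕ) :
    (∑ ℓ₆ ∈ Finset.Icc 6 (n - 1), ∑ ℓ₅ ∈ Finset.Icc 5 (ℓ₆ - 1),
      ∑ ℓ₄ ∈ Finset.Icc 4 (ℓ₅ - 1), ∑ ℓ₃ ∈ Finset.Icc 3 (ℓ₄ - 1),
        ∑ ℓ₂ ∈ Finset.Icc 2 (ℓ₃ - 1), ∑ ℓ₁ ∈ Finset.Icc 1 (ℓ₂ - 1),
          1 / ((ℓ₁ : ℝ) ^ 2 * (ℓ₂ : ℝ) ^ 2 * (ℓ₃ : ℝ) ^ 2 * (ℓ₄ : ℝ) ^ 2 *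
            (ℓ₅ : ℝ) ^ 2 * (ℓ₆ : ℝ) ^ 2 * (n : ℝ) ^ 2))
    = AA 6 (n-1) * (1/(n:ℝ)^2) := by
  calc (∑ ℓ₆ ∈ Finset.Icc 6 (n - 1), ∑ ℓ₅ ∈ Finset.Icc 5 (ℓ₆ - 1),
      ∑ ℓ₄ ∈ Finset.Icc 4 (ℓ₅ - 1), ∑ ℓ₃ ∈ Finset.Icc 3 (ℓ₄ - 1),
        ∑ ℓ₂ ∈ Finset.Icc 2 (ℓ₃ - 1), ∑ ℓ₁ ∈ Finset.Icc 1 (ℓ₂ - 1),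
          1 / ((ℓ₁ : ℝ) ^ 2 * (ℓ₂ : ℝ) ^ 2 * (ℓ₃ : ℝ) ^ 2 * (ℓ₄ : ℝ) ^ 2 *
            (ℓ₅ : ℝ) ^ 2 * (ℓ₆ : ℝ) ^ 2 * (n : ℝ) ^ 2))
      = ∑ ℓ₆ ∈ Finset.Icc 6 (n - 1), ∑ ℓ₅ ∈ Finset.Icc 5 (ℓ₆ - 1),
        ∑ ℓ₄ ∈ Finset.Icc 4 (ℓ₅ - 1), ∑ ℓ₃ ∈ Finset.Icc 3 (ℓ₄ - 1),
          ∑ ℓ₂ ∈ Finset.Icc 2 (ℓ₃ - 1),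
            AA 1 (ℓ₂-1) * (1/((ℓ₂:ℝ)^2 * ((ℓ₃:ℝ)^2 * ((ℓ₄:ℝ)^2 * ((ℓ₅:ℝ)^2 *
              ((ℓ₆:ℝ)^2 * (n:ℝ)^2)))))) := by
        refine Finset.sum_congr rfl fun ℓ₆ _ => Finset.sum_congr rfl fun ℓ₅ _ =>
          Finset.sum_congr rfl fun ℓ₄ _ => Finset.sum_congr rfl fun ℓ₃ _ =>
          Finset.sum_congr rfl fun ℓ₂ _ => ?_
        rw [← stepc1 (ℓ₂-1)
          ((ℓ₂:ℝ)^2 * ((ℓ₃:ℝ)^2 * ((ℓ₄:ℝ)^2 * ((ℓ₅:ℝ)^2 * ((ℓ₆:ℝ)^2 * (n:ℝ)^2)))))]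
        exact Finset.sum_congr rfl fun ℓ₁ _ => by ring
    _ = ∑ ℓ₆ ∈ Finset.Icc 6 (n - 1), ∑ ℓ₅ ∈ Finset.Icc 5 (ℓ₆ - 1),
        ∑ ℓ₄ ∈ Finset.Icc 4 (ℓ₅ - 1), ∑ ℓ₃ ∈ Finset.Icc 3 (ℓ₄ - 1),
          AA 2 (ℓ₃-1) * (1/((ℓ₃:ℝ)^2 * ((ℓ₄:ℝ)^2 * ((ℓ₅:ℝ)^2 * ((ℓ₆:ℝ)^2 * (n:ℝ)^2))))) := by
        refine Finset.sum_congr rfl fun ℓ₆ _ => Finset.sum_congr rfl fun ℓ₅ _ =>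
          Finset.sum_congr rfl fun ℓ₄ _ => Finset.sum_congr rfl fun ℓ₃ _ => ?_
        exact stepc 1 (ℓ₃-1) _
    _ = ∑ ℓ₆ ∈ Finset.Icc 6 (n - 1), ∑ ℓ₅ ∈ Finset.Icc 5 (ℓ₆ - 1),
        ∑ ℓ₄ ∈ Finset.Icc 4 (ℓ₅ - 1),
          AA 3 (ℓ₄-1) * (1/((ℓ₄:ℝ)^2 * ((ℓ₅:ℝ)^2 * ((ℓ₆:ℝ)^2 * (n:ℝ)^2)))) := by
        refine Finset.sum_congr rfl fun ℓ₆ _ => Finset.sum_congr rfl fun ℓ₅ _ =>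
          Finset.sum_congr rfl fun ℓ₄ _ => ?_
        exact stepc 2 (ℓ₄-1) _
    _ = ∑ ℓ₆ ∈ Finset.Icc 6 (n - 1), ∑ ℓ₅ ∈ Finset.Icc 5 (ℓ₆ - 1),
          AA 4 (ℓ₅-1) * (1/((ℓ₅:ℝ)^2 * ((ℓ₆:ℝ)^2 * (n:ℝ)^2))) := by
        refine Finset.sum_congr rfl fun ℓ₆ _ => Finset.sum_congr rfl fun ℓ₅ _ => ?_
        exact stepc 3 (ℓ₅-1) _
    _ = ∑ ℓ₆ ∈ Finset.Icc 6 (n - 1),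
          AA 5 (ℓ₆-1) * (1/((ℓ₆:ℝ)^2 * (n:ℝ)^2)) := by
        refine Finset.sum_congr rfl fun ℓ₆ _ => ?_
        exact stepc 4 (ℓ₆-1) _
    _ = AA 6 (n-1) * (1/(n:ℝ)^2) := stepc 5 (n-1) _

noncomputable def Ff (n : ℕ) : ℝ := AA 6 (n-1) * (1/(n:ℝ)^2)

lemma Ff_nonneg (n : ℕ) : 0 ≤ Ff n := by
  rw [Ff, AA_eq_Ee]
  have := Ee_nonneg 6 (n-1)
  positivity

lemma Ff_partial (N : ℕ) : ∑ i ∈ Finset.range (N+1), Ff i = AA 7 N := by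
  induction N with
  | zero => simp [Ff, AA]
  | succ N ih =>
    rw [Finset.sum_range_succ, ih]
    show AA 7 N + Ff (N+1) = AA 7 (N+1)
    rw [show AA 7 (N+1) = ∑ n ∈ Finset.Icc 1 (N+1), (1/(n:ℝ)^2) * AA 6 (n-1) from rfl,
      Finset.sum_Icc_succ_top (by omega : 1 ≤ N+1),
      show (∑ n ∈ Finset.Icc 1 N, (1/(n:ℝ)^2) * AA 6 (n-1)) = AA 7 N from rfl]
    rw [Ff]
    push_cast
    ring

lemma Ff_hasSum : HasSum Ff (π ^ 14 / 1307674368000) := by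
  rw [hasSum_iff_tendsto_nat_of_nonneg Ff_nonneg]
  have h7 : Tendsto (fun N => AA 7 N) atTop (nhds (π ^ 14 / 1307674368000)) := by
    have := Et7
    refine Tendsto.congr (fun N => ?_) this
    rw [AA_eq_Ee]
  have hshift : Tendsto (fun N => ∑ i ∈ Finset.range (N+1), Ff i) atTop
      (nhds (π ^ 14 / 1307674368000)) :=
    Tendsto.congr (fun N => (Ff_partial N).symm) h7
  exact (tendsto_add_atTop_iff_nat (f := fun n => ∑ i ∈ Finset.range n, Ff i)
    (l := nhds (π ^ 14 / 1307674368000)) 1).mp hshift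

lemma Ff_support : Function.support Ff ⊆ {m : ℕ | 7 ≤ m} := by
  intro n hn
  simp only [Function.mem_support] at hn
  by_contra h
  apply hn
  rw [Ff, AA_vanish (by simp at h; omega : n - 1 < 6)]
  ring

theorem stmt_12 :
    Summable (fun ℓ₇ : {m : ℕ // 7 ≤ m} =>
        ∑ ℓ₆ ∈ Finset.Icc 6 ((ℓ₇ : ℕ) - 1), ∑ ℓ₅ ∈ Finset.Icc 5 (ℓ₆ - 1),
          ∑ ℓ₄ ∈ Finset.Icc 4 (ℓ₅ - 1), ∑ ℓ₃ ∈ Finset.Icc 3 (ℓ₄ - 1),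
            ∑ ℓ₂ ∈ Finset.Icc 2 (ℓ₃ - 1), ∑ ℓ₁ ∈ Finset.Icc 1 (ℓ₂ - 1),
              1 / ((ℓ₁ : ℝ) ^ 2 * (ℓ₂ : ℝ) ^ 2 * (ℓ₃ : ℝ) ^ 2 * (ℓ₄ : ℝ) ^ 2 *
                (ℓ₅ : ℝ) ^ 2 * (ℓ₆ : ℝ) ^ 2 * ((ℓ₇ : ℕ) : ℝ) ^ 2)) ∧
      ∑' ℓ₇ : {m : ℕ // 7 ≤ m},
          ∑ ℓ₆ ∈ Finset.Icc 6 ((ℓ₇ : ℕ) - 1), ∑ ℓ₅ ∈ Finset.Icc 5 (ℓ₆ - 1),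
            ∑ ℓ₄ ∈ Finset.Icc 4 (ℓ₅ - 1), ∑ ℓ₃ ∈ Finset.Icc 3 (ℓ₄ - 1),
              ∑ ℓ₂ ∈ Finset.Icc 2 (ℓ₃ - 1), ∑ ℓ₁ ∈ Finset.Icc 1 (ℓ₂ - 1),
                1 / ((ℓ₁ : ℝ) ^ 2 * (ℓ₂ : ℝ) ^ 2 * (ℓ₃ : ℝ) ^ 2 * (ℓ₄ : ℝ) ^ 2 *
                  (ℓ₅ : ℝ) ^ 2 * (ℓ₆ : ℝ) ^ 2 * ((ℓ₇ : ℕ) : ℝ) ^ 2) =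
        π ^ 14 / (Nat.factorial 15 : ℝ) := by
  have hfun : (fun ℓ₇ : {m : ℕ // 7 ≤ m} =>
        ∑ ℓ₆ ∈ Finset.Icc 6 ((ℓ₇ : ℕ) - 1), ∑ ℓ₅ ∈ Finset.Icc 5 (ℓ₆ - 1),
          ∑ ℓ₄ ∈ Finset.Icc 4 (ℓ₅ - 1), ∑ ℓ₃ ∈ Finset.Icc 3 (ℓ₄ - 1),
            ∑ ℓ₂ ∈ Finset.Icc 2 (ℓ₃ - 1), ∑ ℓ₁ ∈ Finset.Icc 1 (ℓ₂ - 1),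
              1 / ((ℓ₁ : ℝ) ^ 2 * (ℓ₂ : ℝ) ^ 2 * (ℓ₃ : ℝ) ^ 2 * (ℓ₄ : ℝ) ^ 2 *
                (ℓ₅ : ℝ) ^ 2 * (ℓ₆ : ℝ) ^ 2 * ((ℓ₇ : ℕ) : ℝ) ^ 2))
      = fun ℓ₇ : {m : ℕ // 7 ≤ m} => Ff (ℓ₇ : ℕ) := by
    funext x
    exact inner_eq (x : ℕ)
  have hs : HasSum (fun ℓ₇ : {m : ℕ // 7 ≤ m} => Ff (ℓ₇ : ℕ))
      (π ^ 14 / 1307674368000) :=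
    (hasSum_subtype_iff_of_support_subset Ff_support).mpr Ff_hasSum
  have h15 : (Nat.factorial 15 : ℝ) = 1307674368000 := by
    norm_num [Nat.factorial]
  rw [hfun, h15]
  exact ⟨hs.summable, hs.tsum_eq⟩
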